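/- In the static team problem, suppose that for P-a.e. ω the map u ↦ L(u, ω) is (jointly) convex and differentiable on A^1 × … × A^N, that every admissible strategy profile has P-integrable cost, that J(γ^o) < ∞, that ω ↦ ∇_u L(γ^o(ω), ω) is P-integrable, and that for every admissible γ the map ω ↦ Σ_i ⟨∇_{u^i} L(γ^o(ω), ω), γ^i(ω) − γ^{i,o}(ω)⟩ is P-integrable. If γ^o is person-by-person optimal, i.e. for every i and every G^i-measurable γ^i : Ω → A^i one has J(γ^{1,o}, …, γ^{i−1,o}, γ^i, γ^{i+1,o}, …, γ^{N,o}) ≥ J(γ^o), then γ^o is team optimal: J(γ^o) ≤ J(γ) for every admissible strategy profile γ. -/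

import Mathlib

open MeasureTheory Filter Topology Set
open scoped RealInnerProductSpace

section aux
variable {E : Type*} [NormedAddCommGroup E] [InnerProductSpace ℝ E] [CompleteSpace E]
variable {f : E → ℝ} {S : Set E} {x y g : E}

theorem aux_slope_tendsto (hS : Convex ℝ S) (hg : HasGradientWithinAt f g S x)
    (hx : x ∈ S) (hy : y ∈ S) :
    Tendsto (fun t : ℝ => (f (x + t • (y - x)) - f x) / t) (𝓝[>] (0:ℝ))
      (𝓝 ⟪g, y - x⟫) := by
  set c : ℝ → E := fun t => x + t • (y - x) with hc_def
  have hmaps : MapsTo c (Icc (0:ℝ) 1) S := fun t ht => hS.add_smul_sub_mem hx hy ht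
  have hc0 : HasDerivWithinAt c (y - x) (Icc (0:ℝ) 1) 0 := by
    simpa [hc_def] using (((hasDerivAt_id (0:ℝ)).smul_const (y - x)).const_add x).hasDerivWithinAt
      (s := Icc (0:ℝ) 1)
  have hgF : HasFDerivWithinAt f (InnerProductSpace.toDual ℝ E g) S (c 0) := by
    simpa [hc_def] using hg.hasFDerivWithinAt
  have hcomp : HasDerivWithinAt (f ∘ c) ⟪g, y - x⟫ (Icc (0:ℝ) 1) 0 := by
    simpa [InnerProductSpace.toDual_apply_apply] using
      hgF.comp_hasDerivWithinAt (0:ℝ) hc0 hmaps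
  have hslope := hasDerivWithinAt_iff_tendsto_slope.mp hcomp
  have hsub : 𝓝[>] (0:ℝ) ≤ 𝓝[Icc (0:ℝ) 1 \ {0}] 0 := by
    rw [← nhdsWithin_Ioc_eq_nhdsGT (zero_lt_one (α := ℝ))]
    exact nhdsWithin_mono _ (fun t ht => ⟨⟨le_of_lt ht.1, ht.2⟩, ne_of_gt ht.1⟩)
  have := hslope.mono_left hsub
  refine this.congr' ?_
  filter_upwards [self_mem_nhdsWithin] with t ht
  simp [slope_def_field, Function.comp, hc_def, div_eq_mul_inv, mul_comm]

theorem aux_slope_le (hf : ConvexOn ℝ S f) (hx : x ∈ S) (hy : y ∈ S) {t : ℝ}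
    (ht : t ∈ Ioc (0:ℝ) 1) :
    (f (x + t • (y - x)) - f x) / t ≤ f y - f x := by
  have h1 : x + t • (y - x) = (1 - t) • x + t • y := by
    rw [smul_sub, sub_smul, one_smul]; abel
  have h2 := hf.2 hx hy (by linarith [ht.2] : (0:ℝ) ≤ 1 - t) (le_of_lt ht.1)
    (by ring)
  rw [smul_eq_mul, smul_eq_mul] at h2
  rw [h1, div_le_iff₀ ht.1]
  calc f ((1 - t) • x + t • y) - f x ≤ (1 - t) * f x + t * f y - f x := by linarith
    _ = (f y - f x) * t := by ring

theorem aux_subgrad (hf : ConvexOn ℝ S f) (hg : HasGradientWithinAt f g S x)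
    (hx : x ∈ S) (hy : y ∈ S) : ⟪g, y - x⟫ ≤ f y - f x := by
  have htd := aux_slope_tendsto hf.1 hg hx hy
  have hne : (𝓝[>] (0:ℝ)).NeBot := nhdsGT_neBot 0
  refine le_of_tendsto htd ?_
  filter_upwards [Ioo_mem_nhdsGT_of_mem (by norm_num : (0:ℝ) ∈ Ico (0:ℝ) 1)] with t ht
  exact aux_slope_le hf hx hy ⟨ht.1, le_of_lt ht.2⟩

theorem aux_slope_ge (hf : ConvexOn ℝ S f) (hg : HasGradientWithinAt f g S x)
    (hx : x ∈ S) (hy : y ∈ S) {t : ℝ} (ht : t ∈ Ioc (0:ℝ) 1) :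
    ⟪g, y - x⟫ ≤ (f (x + t • (y - x)) - f x) / t := by
  have hyt : x + t • (y - x) ∈ S := hf.1.add_smul_sub_mem hx hy ⟨le_of_lt ht.1, ht.2⟩
  have := aux_subgrad hf hg hx hyt
  rw [add_sub_cancel_left, real_inner_smul_right] at this
  rw [le_div_iff₀ ht.1]
  linarith [this]

end aux

/-- The product σ-algebra on `PiLp 2` (which is by definition the product type). -/
instance piLpMeasurableSpace {ι : Type*} {p : ENNReal} (E : ι → Type*)
    [∀ i, MeasurableSpace (E i)] : MeasurableSpace (PiLp p E) :=
  MeasurableSpace.comap WithLp.ofLp MeasurableSpace.pi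

/-- **Person-by-person optimality implies team optimality under joint convexity.**
In the static team problem, suppose the cost `u ↦ L u ω` is a.e. jointly convex and
differentiable on the product action set (with gradient `q ω` at `γᵒ ω`), every
admissible strategy profile has P-integrable cost, `q` is P-integrable and the
directional terms are P-integrable.  If `γᵒ` is person-by-person optimal (no decision
maker can improve the pay-off by unilaterally changing its own `Gⁱ`-measurable
strategy), then `γᵒ` is team optimal. -/
theorem static_team_pbp_implies_team_optimal
    {Ω : Type*} [MeasurableSpace Ω] (P : Measure Ω) [IsProbabilityMeasure P]
    {N : ℕ} {d : Fin N → ℕ}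
    (A : ∀ i, Set (EuclideanSpace ℝ (Fin (d i))))
    (hAne : ∀ i, (A i).Nonempty) (hAconv : ∀ i, Convex ℝ (A i))
    (hAmeas : ∀ i, MeasurableSet (A i))
    (G : Fin N → MeasurableSpace Ω) (hG : ∀ i, G i ≤ ‹MeasurableSpace Ω›)
    (L : PiLp 2 (fun i => EuclideanSpace ℝ (Fin (d i))) → Ω → ℝ)
    (hLmeas : Measurable (Function.uncurry L))
    -- admissible strategy profiles:
    (Admissible : (Ω → PiLp 2 fun i => EuclideanSpace ℝ (Fin (d i))) → Prop)
    (hAdm : ∀ γ, Admissible γ ↔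
      (∀ i, Measurable[G i] fun ω => γ ω i) ∧ ∀ ω, ∀ i, γ ω i ∈ A i)
    -- a.e. joint convexity and differentiability of the cost on the product action
    -- set, with gradient `q ω` at the point `γᵒ ω`:
    (γo : Ω → PiLp 2 fun i => EuclideanSpace ℝ (Fin (d i)))
    (q : Ω → PiLp 2 fun i => EuclideanSpace ℝ (Fin (d i)))
    (hconv : ∀ᵐ ω ∂P, ConvexOn ℝ (WithLp.ofLp ⁻¹' Set.univ.pi A) (fun u => L u ω) ∧
      DifferentiableOn ℝ (fun u => L u ω) (WithLp.ofLp ⁻¹' Set.univ.pi A) ∧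
      HasGradientWithinAt (fun u => L u ω) (q ω) (WithLp.ofLp ⁻¹' Set.univ.pi A) (γo ω))
    (hγoAdm : Admissible γo)
    -- every admissible strategy profile has integrable cost:
    (hIntAll : ∀ γ, Admissible γ → Integrable (fun ω => L (γ ω) ω) P)
    (hγoInt : Integrable (fun ω => L (γo ω) ω) P)
    (hqInt : Integrable q P)
    -- the directional terms are integrable:
    (hdirInt : ∀ γ, Admissible γ →
      Integrable (fun ω => ∑ i, ⟪q ω i, γ ω i - γo ω i⟫) P)
    -- person-by-person optimality of `γᵒ`:
    (hpbp : ∀ i : Fin N, ∀ γi : Ω → EuclideanSpace ℝ (Fin (d i)),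
      Measurable[G i] γi → (∀ ω, γi ω ∈ A i) →
      ∫ ω, L (γo ω) ω ∂P ≤ ∫ ω, L (WithLp.toLp 2 (Function.update (γo ω) i (γi ω))) ω ∂P) :
    -- conclusion: team optimality
    ∀ γ, Admissible γ → ∫ ω, L (γo ω) ω ∂P ≤ ∫ ω, L (γ ω) ω ∂P := by
  classical
  obtain ⟨hγomeas, hγomem⟩ := (hAdm γo).mp hγoAdm
  intro γ hγ
  obtain ⟨hγmeas, hγmem⟩ := (hAdm γ).mp hγ
  have hγoS : ∀ ω, γo ω ∈ WithLp.ofLp ⁻¹' Set.univ.pi A := fun ω =>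
    Set.mem_preimage.mpr (Set.mem_univ_pi.mpr (hγomem ω))
  have hγS : ∀ ω, γ ω ∈ WithLp.ofLp ⁻¹' Set.univ.pi A := fun ω =>
    Set.mem_preimage.mpr (Set.mem_univ_pi.mpr (hγmem ω))
  -- Step 1: the first-order condition for each decision maker.
  have key : ∀ i : Fin N,
      Integrable (fun ω => ⟪q ω i, γ ω i - γo ω i⟫) P ∧
      0 ≤ ∫ ω, ⟪q ω i, γ ω i - γo ω i⟫ ∂P := by
    intro i
    set y : Ω → PiLp 2 fun j => EuclideanSpace ℝ (Fin (d j)) :=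
      fun ω => WithLp.toLp 2 (Function.update (γo ω) i (γ ω i)) with hy_def
    have hyA : ∀ ω j, y ω j ∈ A j := by
      intro ω j
      by_cases h : j = i
      · subst h; simpa [hy_def] using hγmem ω j
      · simpa [hy_def, Function.update_of_ne h] using hγomem ω j
    have hymeas : ∀ j, Measurable[G j] fun ω => y ω j := by
      intro j
      by_cases h : j = i
      · subst h; simpa [hy_def] using hγmeas j
      · simpa [hy_def, Function.update_of_ne h] using hγomeas j
    have hyAdm : Admissible y := (hAdm y).mpr ⟨hymeas, hyA⟩
    have hyS : ∀ ω, y ω ∈ WithLp.ofLp ⁻¹' Set.univ.pi A := fun ω =>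
      Set.mem_preimage.mpr (Set.mem_univ_pi.mpr (hyA ω))
    -- the single-coordinate directional term and its integrability
    have hsum_eq : (fun ω => ∑ j, ⟪q ω j, y ω j - γo ω j⟫) =
        fun ω => ⟪q ω i, γ ω i - γo ω i⟫ := by
      funext ω
      rw [Finset.sum_eq_single i]
      · simp [hy_def]
      · intro j _ hj
        simp [hy_def, Function.update_of_ne hj]
      · simp
    have hinner_eq : ∀ ω, ⟪q ω, y ω - γo ω⟫ = ⟪q ω i, γ ω i - γo ω i⟫ := by
      intro ω
      rw [PiLp.inner_apply]
      have : ∀ j, ⟪q ω j, (y ω - γo ω) j⟫ = ⟪q ω j, y ω j - γo ω j⟫ := by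
        intro j; rw [PiLp.sub_apply]
      rw [Finset.sum_congr rfl fun j _ => this j]
      exact congrFun hsum_eq ω
    have hInti : Integrable (fun ω => ⟪q ω i, γ ω i - γo ω i⟫) P :=
      hsum_eq ▸ hdirInt y hyAdm
    refine ⟨hInti, ?_⟩
    -- the sequence of step sizes
    set t : ℕ → ℝ := fun n => ((n : ℝ) + 1)⁻¹ with ht_def
    have htmem : ∀ n, t n ∈ Set.Ioc (0:ℝ) 1 := by
      intro n
      constructor
      · positivity
      · apply inv_le_one_of_one_le₀
        linarith [(Nat.cast_nonneg n : (0:ℝ) ≤ n)]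
    -- the unilateral deviations
    set δ : ℕ → Ω → EuclideanSpace ℝ (Fin (d i)) :=
      fun n ω => γo ω i + t n • (γ ω i - γo ω i) with hδ_def
    have hδmeas : ∀ n, Measurable[G i] (δ n) := by
      intro n
      have goal2 : Measurable[G i] (fun ω => WithLp.ofLp (δ n ω)) := by
        refine @measurable_pi_lambda Ω (Fin (d i)) (fun _ => ℝ) (G i) _ _ fun k => ?_
        have h1 : Measurable[G i] fun ω => γo ω i k :=
          (measurable_pi_apply k).comp ((WithLp.measurable_ofLp 2 _).comp (hγomeas i))
        have h2 : Measurable[G i] fun ω => γ ω i k :=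
          (measurable_pi_apply k).comp ((WithLp.measurable_ofLp 2 _).comp (hγmeas i))
        simp [hδ_def, PiLp.add_apply, PiLp.smul_apply, PiLp.sub_apply, smul_eq_mul]
        exact h1.add (measurable_const.mul (h2.sub h1))
      exact (WithLp.measurable_toLp 2 _).comp goal2
    have hδA : ∀ n ω, δ n ω ∈ A i := fun n ω =>
      (hAconv i).add_smul_sub_mem (hγomem ω i) (hγmem ω i)
        ⟨le_of_lt (htmem n).1, (htmem n).2⟩
    have hupd_eq : ∀ n ω,
        WithLp.toLp 2 (Function.update (γo ω) i (δ n ω)) = γo ω + t n • (y ω - γo ω) := by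
      intro n ω
      refine PiLp.ext fun j => ?_
      by_cases h : j = i
      · subst h
        simp [hδ_def, hy_def, PiLp.add_apply, PiLp.smul_apply, PiLp.sub_apply]
      · simp [hδ_def, hy_def, Function.update_of_ne h, PiLp.add_apply,
          PiLp.smul_apply, PiLp.sub_apply]
    have hxnAdm : ∀ n, Admissible fun ω => WithLp.toLp 2 (Function.update (γo ω) i (δ n ω)) := by
      intro n
      refine (hAdm _).mpr ⟨fun j => ?_, fun ω j => ?_⟩
      · by_cases h : j = i
        · subst h; simpa using hδmeas n
        · simpa [Function.update_of_ne h] using hγomeas j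
      · by_cases h : j = i
        · subst h; simpa using hδA n ω
        · simpa [Function.update_of_ne h] using hγomem ω j
    -- difference quotients
    set F : ℕ → Ω → ℝ :=
      fun n ω => (L (γo ω + t n • (y ω - γo ω)) ω - L (γo ω) ω) / t n with hF_def
    have hxnInt : ∀ n, Integrable (fun ω => L (γo ω + t n • (y ω - γo ω)) ω) P := by
      intro n
      have := hIntAll _ (hxnAdm n)
      refine this.congr (Filter.Eventually.of_forall fun ω => ?_)
      simp only [hupd_eq]
    have hFInt : ∀ n, Integrable (F n) P := fun n =>
      ((hxnInt n).sub hγoInt).div_const _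
    have hFpos : ∀ n, 0 ≤ ∫ ω, F n ω ∂P := by
      intro n
      rw [hF_def]
      rw [integral_div]
      apply div_nonneg _ (le_of_lt (htmem n).1)
      rw [integral_sub (hxnInt n) hγoInt]
      have hp := hpbp i (δ n) (hδmeas n) (fun ω => hδA n ω)
      have heq : ∫ ω, L (WithLp.toLp 2 (Function.update (γo ω) i (δ n ω))) ω ∂P =
          ∫ ω, L (γo ω + t n • (y ω - γo ω)) ω ∂P := by
        refine integral_congr_ae (Filter.Eventually.of_forall fun ω => ?_)
        simp only [hupd_eq]
      rw [heq] at hp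
      linarith
    -- dominated convergence
    have hbnd : Integrable
        (fun ω => |L (y ω) ω - L (γo ω) ω| + |⟪q ω i, γ ω i - γo ω i⟫|) P :=
      ((hIntAll y hyAdm).sub hγoInt).abs.add hInti.abs
    have htn : Filter.Tendsto t Filter.atTop (𝓝[>] (0:ℝ)) := by
      apply tendsto_nhdsWithin_of_tendsto_nhds_of_eventually_within
      · have := tendsto_one_div_add_atTop_nhds_zero_nat (𝕜 := ℝ)
        simpa [ht_def, one_div] using this
      · exact Filter.Eventually.of_forall fun n => (htmem n).1
    have hDCT : Filter.Tendsto (fun n => ∫ ω, F n ω ∂P) Filter.atTop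
        (𝓝 (∫ ω, ⟪q ω i, γ ω i - γo ω i⟫ ∂P)) := by
      refine tendsto_integral_of_dominated_convergence _
        (fun n => (hFInt n).aestronglyMeasurable) hbnd ?_ ?_
      · intro n
        filter_upwards [hconv] with ω hω
        obtain ⟨hcx, -, hgrad⟩ := hω
        have hle := aux_slope_le hcx (hγoS ω) (hyS ω) (htmem n)
        have hge := aux_slope_ge hcx hgrad (hγoS ω) (hyS ω) (htmem n)
        rw [hinner_eq ω] at hge
        simp only [] at hle hge
        rw [hF_def, Real.norm_eq_abs, abs_le]
        constructor
        · have h1 := neg_abs_le (⟪q ω i, γ ω i - γo ω i⟫)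
          have h2 := abs_nonneg (L (y ω) ω - L (γo ω) ω)
          simp only []
          linarith
        · have h1 := le_abs_self (L (y ω) ω - L (γo ω) ω)
          have h2 := abs_nonneg (⟪q ω i, γ ω i - γo ω i⟫)
          simp only []
          linarith
      · filter_upwards [hconv] with ω hω
        obtain ⟨hcx, -, hgrad⟩ := hω
        have := (aux_slope_tendsto hcx.1 hgrad (hγoS ω) (hyS ω)).comp htn
        rw [hinner_eq ω] at this
        exact this
    have := ge_of_tendsto' hDCT hFpos
    exact this
  -- Step 2: sum over decision makers
  have hsum0 : 0 ≤ ∫ ω, ∑ i, ⟪q ω i, γ ω i - γo ω i⟫ ∂P := by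
    rw [integral_finset_sum _ fun i _ => (key i).1]
    exact Finset.sum_nonneg fun i _ => (key i).2
  -- Step 3: joint convexity gradient inequality
  have hmain : ∫ ω, ∑ i, ⟪q ω i, γ ω i - γo ω i⟫ ∂P ≤
      ∫ ω, (L (γ ω) ω - L (γo ω) ω) ∂P := by
    apply integral_mono_ae (hdirInt γ hγ) ((hIntAll γ hγ).sub hγoInt)
    filter_upwards [hconv] with ω hω
    obtain ⟨hcx, -, hgrad⟩ := hω
    have h := aux_subgrad hcx hgrad (hγoS ω) (hγS ω)
    have hinner : ⟪q ω, γ ω - γo ω⟫ = ∑ i, ⟪q ω i, γ ω i - γo ω i⟫ := by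
      rw [PiLp.inner_apply]
      exact Finset.sum_congr rfl fun j _ => by rw [PiLp.sub_apply]
    rw [hinner] at h
    exact h
  rw [integral_sub (hIntAll γ hγ) hγoInt] at hmain
  linarith
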